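/- Let {aᵢ ⊗ bᵢ : i = 1…d} be an orthonormal product basis of ℂ^{d₁} ⊗ ℂ^{d₂}, d = d₁d₂, and let κ, λ ∈ {1…d} be two indices with κ ≠ λ and ⟨b_κ, b_λ⟩ ≠ 0 (so that necessarily ⟨a_κ, a_λ⟩ = 0). Then the set of vectors {a_κ, a_λ} ∪ {aᵢ : i ≠ κ, i ≠ λ, ⟨b_κ, bᵢ⟩⟨b_λ, bᵢ⟩ ≠ 0} spans ℂ^{d₁}. In particular, the set I_{κλ} = {i ≠ κ, λ : ⟨b_κ, bᵢ⟩⟨b_λ, bᵢ⟩ ≠ 0} contains at least d₁ − 2 elements, and for each i ∈ I_{κλ} the vector aᵢ is orthogonal to both a_κ and a_λ. -/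

import Mathlib

open scoped ComplexInnerProductSpace

/-- The tensor product of two vectors, realized concretely on `EuclideanSpace`:
`(a ⊗ b) (i, j) = a i * b j`. -/
noncomputable def eprod {ι γ : Type*} (a : EuclideanSpace ℂ ι) (b : EuclideanSpace ℂ γ) :
    EuclideanSpace ℂ (ι × γ) :=
  WithLp.toLp 2 (fun p : ι × γ => a p.1 * b p.2)

lemma eprod_inner {ι γ : Type*} [Fintype ι] [Fintype γ]
    (a c : EuclideanSpace ℂ ι) (b d : EuclideanSpace ℂ γ) :
    ⟪eprod a b, eprod c d⟫ = ⟪a, c⟫ * ⟪b, d⟫ := by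
  simp only [eprod, WithLp.ofLp_toLp, PiLp.inner_apply, RCLike.inner_apply, map_mul, Fintype.sum_prod_type,
    Finset.sum_mul, Finset.mul_sum]
  rw [Finset.sum_comm]
  exact Finset.sum_congr rfl fun i _ => Finset.sum_congr rfl fun j _ => by ring

/-- For an orthonormal product basis `{aᵢ ⊗ bᵢ : i = 1…d}` of `ℂ^{d₁} ⊗ ℂ^{d₂}` and two
indices `κ ≠ λ` with `⟨b_κ, b_λ⟩ ≠ 0` (so that `⟨a_κ, a_λ⟩ = 0`), the set
`{a_κ, a_λ} ∪ {aᵢ : i ≠ κ, λ, ⟨b_κ, bᵢ⟩⟨b_λ, bᵢ⟩ ≠ 0}` spans `ℂ^{d₁}`; in particular the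
index set `I_{κλ}` has at least `d₁ - 2` elements and each `aᵢ` with `i ∈ I_{κλ}` is
orthogonal to both `a_κ` and `a_λ`. -/
theorem product_basis_first_factor_span_two {d₁ d₂ : ℕ} (hd₁ : 0 < d₁) (hd₂ : 0 < d₂)
    (a : Fin (d₁ * d₂) → EuclideanSpace ℂ (Fin d₁))
    (b : Fin (d₁ * d₂) → EuclideanSpace ℂ (Fin d₂))
    (ha : ∀ i, ‖a i‖ = 1) (hb : ∀ i, ‖b i‖ = 1)
    (hB : Orthonormal ℂ (fun i => eprod (a i) (b i)))
    (κ l : Fin (d₁ * d₂)) (hκl : κ ≠ l) (hbκl : ⟪b κ, b l⟫ ≠ 0) :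
    ⟪a κ, a l⟫ = 0 ∧
    Submodule.span ℂ
      (insert (a κ) (insert (a l)
        (a '' {i | i ≠ κ ∧ i ≠ l ∧ ⟪b κ, b i⟫ * ⟪b l, b i⟫ ≠ 0}))) = ⊤ ∧
    d₁ - 2 ≤ {i | i ≠ κ ∧ i ≠ l ∧ ⟪b κ, b i⟫ * ⟪b l, b i⟫ ≠ 0}.ncard ∧
    ∀ i, i ≠ κ → i ≠ l → ⟪b κ, b i⟫ * ⟪b l, b i⟫ ≠ 0 →
      ⟪a κ, a i⟫ = 0 ∧ ⟪a l, a i⟫ = 0 := by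
  classical
  have key : ∀ i j, ⟪a i, a j⟫ * ⟪b i, b j⟫ = if i = j then (1:ℂ) else 0 := fun i j => by
    rw [← eprod_inner]; exact orthonormal_iff_ite.mp hB i j
  have keyne : ∀ i j, i ≠ j → ⟪a i, a j⟫ * ⟪b i, b j⟫ = 0 := fun i j h => by
    rw [key i j, if_neg h]
  -- first claim
  have haκl : ⟪a κ, a l⟫ = 0 := by
    rcases mul_eq_zero.mp (keyne κ l hκl) with h | h
    · exact h
    · exact absurd h hbκl
  -- last claim
  have hlast : ∀ i, i ≠ κ → i ≠ l → ⟪b κ, b i⟫ * ⟪b l, b i⟫ ≠ 0 →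
      ⟪a κ, a i⟫ = 0 ∧ ⟪a l, a i⟫ = 0 := by
    intro i hiκ hil hne
    have h1 : ⟪b κ, b i⟫ ≠ 0 := fun h => hne (by rw [h, zero_mul])
    have h2 : ⟪b l, b i⟫ ≠ 0 := fun h => hne (by rw [h, mul_zero])
    constructor
    · rcases mul_eq_zero.mp (keyne κ i (Ne.symm hiκ)) with h | h
      · exact h
      · exact absurd h h1
    · rcases mul_eq_zero.mp (keyne l i (Ne.symm hil)) with h | h
      · exact h
      · exact absurd h h2
  -- orthonormal basis of the big space
  haveI : Nonempty (Fin (d₁ * d₂)) := Fin.pos_iff_nonempty.mp (Nat.mul_pos hd₁ hd₂)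
  have hcard : Fintype.card (Fin (d₁ * d₂))
      = Module.finrank ℂ (EuclideanSpace ℂ (Fin d₁ × Fin d₂)) := by
    simp [finrank_euclideanSpace]
  let Bas := (basisOfOrthonormalOfCardEqFinrank hB hcard).toOrthonormalBasis
    (by rwa [coe_basisOfOrthonormalOfCardEqFinrank])
  have hBas : ∀ i, Bas i = eprod (a i) (b i) := fun i => by
    show (Bas : _ → _) i = _
    rw [Module.Basis.coe_toOrthonormalBasis, coe_basisOfOrthonormalOfCardEqFinrank]
  set I : Set (Fin (d₁ * d₂)) := {i | i ≠ κ ∧ i ≠ l ∧ ⟪b κ, b i⟫ * ⟪b l, b i⟫ ≠ 0} with hI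
  set S : Set (EuclideanSpace ℂ (Fin d₁)) := insert (a κ) (insert (a l) (a '' I)) with hSdef
  -- the span claim
  have hspan : Submodule.span ℂ S = ⊤ := by
    rw [← Submodule.orthogonal_eq_bot_iff]
    rw [Submodule.eq_bot_iff]
    intro v hv
    rw [Submodule.mem_orthogonal] at hv
    have hv' : ∀ x ∈ S, ⟪x, v⟫ = 0 := fun x hx => hv x (Submodule.subset_span hx)
    have hvκ : ⟪a κ, v⟫ = 0 := hv' _ (Set.mem_insert _ _)
    have hvl : ⟪a l, v⟫ = 0 := hv' _ (Set.mem_insert_of_mem _ (Set.mem_insert _ _))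
    have hvI : ∀ i ∈ I, ⟪a i, v⟫ = 0 := fun i hi =>
      hv' _ (Set.mem_insert_of_mem _ (Set.mem_insert_of_mem _ ⟨i, hi, rfl⟩))
    have hsum : ∑ i, ⟪eprod v (b κ), Bas i⟫ * ⟪Bas i, eprod v (b l)⟫ = 0 := by
      refine Finset.sum_eq_zero fun i _ => ?_
      rw [hBas, eprod_inner, eprod_inner]
      by_cases hiκ : i = κ
      · subst hiκ
        have : ⟪v, a i⟫ = 0 := inner_eq_zero_symm.mp hvκ
        rw [this]; ring
      by_cases hil : i = l
      · subst hil
        have : ⟪v, a i⟫ = 0 := inner_eq_zero_symm.mp hvl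
        rw [this]; ring
      by_cases hiI : ⟪b κ, b i⟫ * ⟪b l, b i⟫ = 0
      · rcases mul_eq_zero.mp hiI with h | h
        · rw [h]; ring
        · have : ⟪b i, b l⟫ = 0 := inner_eq_zero_symm.mp h
          rw [this]; ring
      · have : ⟪a i, v⟫ = 0 := hvI i ⟨hiκ, hil, hiI⟩
        rw [this]; ring
    rw [Bas.sum_inner_mul_inner, eprod_inner] at hsum
    rcases mul_eq_zero.mp hsum with h | h
    · exact inner_self_eq_zero.mp h
    · exact absurd h hbκl
  -- cardinality claim
  have hIfin : I.Finite := Set.toFinite _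
  have hSfin : S.Finite := ((hIfin.image a).insert _).insert _
  haveI := hSfin.fintype
  have hd : d₁ ≤ S.ncard := by
    have h1 := finrank_span_le_card (R := ℂ) S
    rw [hspan, finrank_top] at h1
    rw [Set.ncard_eq_toFinset_card']
    simpa [finrank_euclideanSpace] using h1
  have hS2 : S.ncard ≤ 2 + I.ncard := by
    calc S.ncard ≤ (insert (a l) (a '' I)).ncard + 1 :=
          Set.ncard_insert_le _ _
      _ ≤ ((a '' I).ncard + 1) + 1 := by
          have := Set.ncard_insert_le (a l) (a '' I)
          omega
      _ ≤ 2 + I.ncard := by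
          have := Set.ncard_image_le (f := a) hIfin
          omega
  exact ⟨haκl, hspan, by omega, hlast⟩
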